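/- In the support-list GAC scheme, a value v is in the valid domain of x_i (i.e., (x_i, v) has support in the MDD) if and only if either the support set s_{i,v} of valid edges e with s(e)=i, v(e)=v is nonempty, or there is a valid long edge skipping layer i. Hence (x_i,v) loses support exactly when s_{i,v} becomes empty and no valid long edge skips layer i. -/

import Mathlib

/-- A path in a labeled multigraph: `Reaches E u Q w` means the list of edges `Q`
(each edge a triple (source, value label, destination)) forms a path from `u` to `w`. -/
inductive Reaches {V : Type} (E : Finset (V × ℕ × V)) : V → List (V × ℕ × V) → V → Prop
  | nil (u : V) : Reaches E u [] u
  | cons {u c w : V} {v : ℕ} {Q : List (V × ℕ × V)} :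
      (u, v, c) ∈ E → Reaches E c Q w → Reaches E u ((u, v, c) :: Q) w

/-- The set of solutions of an MDD with long-edge semantics: a full assignment
`ρ` (with `ρ i ∈ D i` for `1 ≤ i ≤ n`) is a solution iff there is a root-to-terminal
path `Q` such that for each layer `i` either some edge of `Q` leaves layer `i` with
label `ρ i`, or `i` is earlier than the root's layer, or some (long) edge of `Q`
strictly skips layer `i`. -/
def Sols {V : Type} (n : ℕ) (D : ℕ → Finset ℕ) (E : Finset (V × ℕ × V))
    (layer : V → ℕ) (root terminal : V) : Set (ℕ → ℕ) :=
  { ρ | (∀ i ∈ Finset.Icc 1 n, ρ i ∈ D i) ∧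
    ∃ Q, Reaches E root Q terminal ∧
      ∀ i ∈ Finset.Icc 1 n,
        (∃ e ∈ Q, layer e.1 = i ∧ e.2.1 = ρ i) ∨ i < layer root ∨
        (∃ e ∈ Q, layer e.1 < i ∧ i < layer e.2.2) }

/-- An edge is valid iff it lies on some root-to-terminal path of the current MDD. -/
def ValidEdge {V : Type} (E : Finset (V × ℕ × V)) (root terminal : V)
    (e : V × ℕ × V) : Prop :=
  ∃ Q, Reaches E root Q terminal ∧ e ∈ Q


lemma reaches_mem_E {V : Type} {E : Finset (V × ℕ × V)} {u w : V} {Q : List (V × ℕ × V)}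
    (h : Reaches E u Q w) : ∀ e ∈ Q, e ∈ E := by
  induction h with
  | nil => simp
  | cons he _ ih =>
    intro e hm
    rcases List.mem_cons.1 hm with rfl | h'
    · exact he
    · exact ih e h'

lemma reaches_cover {V : Type} {E : Finset (V × ℕ × V)} (layer : V → ℕ) {u w : V}
    {Q : List (V × ℕ × V)} (h : Reaches E u Q w) (j : ℕ) (h1 : layer u ≤ j)
    (h2 : j < layer w) :
    ∃ e ∈ Q, layer e.1 ≤ j ∧ j < layer e.2.2 := by
  induction h with
  | nil u => omega
  | @cons u c w v Q he hr ih =>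
    by_cases hc : j < layer c
    · exact ⟨(u, v, c), List.mem_cons_self, h1, hc⟩
    · obtain ⟨e, he', h3, h4⟩ := ih (by omega) h2
      exact ⟨e, List.mem_cons_of_mem _ he', h3, h4⟩

lemma mk_sol {V : Type} (n : ℕ) (D : ℕ → Finset ℕ) (E : Finset (V × ℕ × V))
    (layer : V → ℕ) (root terminal : V)
    (hlab : ∀ e ∈ E, e.2.1 ∈ D (layer e.1))
    (hD : ∀ i ∈ Finset.Icc 1 n, (D i).Nonempty)
    (hroot : layer root = 1) (hterm : layer terminal = n + 1)
    (i v : ℕ) (hi : i ∈ Finset.Icc 1 n) (hv : v ∈ D i)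
    (Q : List (V × ℕ × V)) (hQ : Reaches E root Q terminal)
    (hcase : (∃ e ∈ Q, layer e.1 = i ∧ e.2.1 = v) ∨
      (∃ e ∈ Q, layer e.1 < i ∧ i < layer e.2.2)) :
    ∃ ρ ∈ Sols n D E layer root terminal, ρ i = v := by
  classical
  simp only [Finset.mem_Icc] at hi
  set ρ : ℕ → ℕ := fun j =>
    if j = i then v
    else if h : ∃ e ∈ Q, layer e.1 = j then h.choose.2.1
    else if h' : (D j).Nonempty then h'.choose else 0 with hρ
  have hρi : ρ i = v := by simp [hρ]
  refine ⟨ρ, ⟨?_, Q, hQ, ?_⟩, hρi⟩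
  · intro j hj
    simp only [Finset.mem_Icc] at hj
    by_cases hji : j = i
    · subst hji; rwa [hρi]
    · simp only [hρ, if_neg hji]
      by_cases h : ∃ e ∈ Q, layer e.1 = j
      · rw [dif_pos h]
        obtain ⟨hmem, hlay⟩ := h.choose_spec
        have := hlab _ (reaches_mem_E hQ _ hmem)
        rwa [hlay] at this
      · have hne := hD j (Finset.mem_Icc.2 hj)
        rw [dif_neg h, dif_pos hne]
        exact hne.choose_spec
  · intro j hj
    simp only [Finset.mem_Icc] at hj
    by_cases hji : j = i
    · subst hji
      rcases hcase with ⟨e, hm, h1, h2⟩ | ⟨e, hm, h1, h2⟩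
      · exact Or.inl ⟨e, hm, h1, by rw [hρi, h2]⟩
      · exact Or.inr (Or.inr ⟨e, hm, h1, h2⟩)
    · obtain ⟨e, hm, h1, h2⟩ := reaches_cover layer hQ j (by omega) (by omega)
      rcases eq_or_lt_of_le h1 with heq | hlt'
      · left
        have h : ∃ e ∈ Q, layer e.1 = j := ⟨e, hm, heq⟩
        obtain ⟨hmem, hlay⟩ := h.choose_spec
        have hval : ρ j = h.choose.2.1 := by
          simp only [hρ]
          rw [if_neg hji, dif_pos h]
        exact ⟨h.choose, hmem, hlay, hval.symm⟩
      · exact Or.inr (Or.inr ⟨e, hm, hlt', h2⟩)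

/-- In the support-list scheme (with the root in layer 1, so that every
layer is at or after the root's layer), a value `v ∈ D i` is in the valid domain of `x i`
— i.e. `(x i, v)` has support in the MDD — if and only if either the support set
`s (i,v)` (the valid edges leaving layer `i` with label `v`) is nonempty, or some valid
long edge strictly skips layer `i`.  Hence `(x i, v)` loses support exactly when
`s (i,v)` becomes empty and no valid long edge skips layer `i`. -/
theorem stmt11 {V : Type} (n : ℕ) (D : ℕ → Finset ℕ) (E : Finset (V × ℕ × V))
    (layer : V → ℕ) (root terminal : V)
    (hlt : ∀ e ∈ E, layer e.1 < layer e.2.2)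
    (hlab : ∀ e ∈ E, e.2.1 ∈ D (layer e.1))
    (hD : ∀ i ∈ Finset.Icc 1 n, (D i).Nonempty)
    (hroot : layer root = 1) (hterm : layer terminal = n + 1)
    (i v : ℕ) (hi : i ∈ Finset.Icc 1 n) (hv : v ∈ D i) :
    (∃ ρ ∈ Sols n D E layer root terminal, ρ i = v) ↔
      ((∃ e, ValidEdge E root terminal e ∧ layer e.1 = i ∧ e.2.1 = v) ∨
        (∃ e, ValidEdge E root terminal e ∧ layer e.1 < i ∧ i < layer e.2.2)) := by
  constructor
  · rintro ⟨ρ, ⟨hdom, Q, hQ, hsupp⟩, hρ⟩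
    rcases hsupp i hi with ⟨e, heQ, h1, h2⟩ | hlt' | ⟨e, heQ, h1, h2⟩
    · exact Or.inl ⟨e, ⟨Q, hQ, heQ⟩, h1, hρ ▸ h2⟩
    · rw [hroot] at hlt'
      simp only [Finset.mem_Icc] at hi
      omega
    · exact Or.inr ⟨e, ⟨Q, hQ, heQ⟩, h1, h2⟩
  · rintro (⟨e, ⟨Q, hQ, heQ⟩, h1, h2⟩ | ⟨e, ⟨Q, hQ, heQ⟩, h1, h2⟩)
    · exact mk_sol n D E layer root terminal hlab hD hroot hterm i v hi hv Q hQ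
        (Or.inl ⟨e, heQ, h1, h2⟩)
    · exact mk_sol n D E layer root terminal hlab hD hroot hterm i v hi hv Q hQ
        (Or.inr ⟨e, heQ, h1, h2⟩)
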